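/- The function f : ℝ → ℝ defined by f(z) = −log(1 − Φ(|z|)) is convex on ℝ. -/

import Mathlib

open Set MeasureTheory Real Filter

/-- The standard normal density φ(t) = (1/√(2π))·exp(−t²/2). -/
noncomputable def stdNormalPDF (t : ℝ) : ℝ :=
  (Real.sqrt (2 * Real.pi))⁻¹ * Real.exp (-t ^ 2 / 2)

/-- The standard normal cumulative distribution function Φ(t) = ∫_{−∞}^t φ(s) ds. -/
noncomputable def stdNormalCDF (t : ℝ) : ℝ :=
  ∫ s in Set.Iic t, stdNormalPDF s

lemma phi_pos (t : ℝ) : 0 < stdNormalPDF t := by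
  unfold stdNormalPDF
  positivity

lemma phi_cont : Continuous stdNormalPDF := by
  unfold stdNormalPDF
  fun_prop

lemma phi_eq (t : ℝ) :
    stdNormalPDF t = (Real.sqrt (2 * Real.pi))⁻¹ * Real.exp (-(1/2) * t ^ 2) := by
  unfold stdNormalPDF; ring_nf

lemma phi_integrable : Integrable stdNormalPDF := by
  have h := (integrable_exp_neg_mul_sq (by norm_num : (0:ℝ) < 1/2)).const_mul
      (Real.sqrt (2 * Real.pi))⁻¹
  exact h.congr (Filter.Eventually.of_forall fun t => (phi_eq t).symm)

lemma integral_phi : ∫ t : ℝ, stdNormalPDF t = 1 := by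
  have h := integral_gaussian (1/2 : ℝ)
  have h2 : (∫ t : ℝ, stdNormalPDF t)
      = (Real.sqrt (2 * Real.pi))⁻¹ * ∫ t : ℝ, Real.exp (-(1/2) * t ^ 2) := by
    rw [← MeasureTheory.integral_const_mul]
    congr 1; funext t; rw [phi_eq]
  rw [h2, h]
  rw [show Real.pi / (1/2 : ℝ) = 2 * Real.pi by ring]
  rw [inv_mul_cancel₀ (by positivity)]

lemma mul_phi_integrable : Integrable (fun t : ℝ => t * stdNormalPDF t) := by
  have h := (integrable_mul_exp_neg_mul_sq (by norm_num : (0:ℝ) < 1/2)).const_mul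
      (Real.sqrt (2 * Real.pi))⁻¹
  exact h.congr (Filter.Eventually.of_forall fun t => by simp only [phi_eq]; ring)

lemma Q_eq (t : ℝ) : 1 - stdNormalCDF t = ∫ s in Set.Ioi t, stdNormalPDF s := by
  have h := intervalIntegral.integral_Iic_add_Ioi (b := t)
      phi_integrable.integrableOn phi_integrable.integrableOn
  rw [integral_phi] at h
  unfold stdNormalCDF
  linarith

lemma Q_pos (t : ℝ) : 0 < 1 - stdNormalCDF t := by
  rw [Q_eq]
  apply setIntegral_pos_iff_support_of_nonneg_ae ?_ phi_integrable.integrableOn |>.mpr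
  · have : (Function.support stdNormalPDF) = Set.univ := by
      ext x; simp [(phi_pos x).ne']
    rw [this, Set.univ_inter]
    simp [Real.volume_Ioi]
  · exact Filter.Eventually.of_forall fun x => (phi_pos x).le

lemma hasDerivAt_negsq (s : ℝ) : HasDerivAt (fun s : ℝ => -s ^ 2 / 2) (-s) s := by
  have := ((hasDerivAt_pow 2 s).div_const 2).neg
  exact (this.congr_deriv (by norm_num)).congr_of_eventuallyEq
    (Filter.Eventually.of_forall fun x => by simp only [Pi.neg_apply]; ring)

lemma hasDerivAt_phi (t : ℝ) : HasDerivAt stdNormalPDF (-t * stdNormalPDF t) t := by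
  have h := ((hasDerivAt_negsq t).exp).const_mul (Real.sqrt (2 * Real.pi))⁻¹
  exact h.congr_deriv (by unfold stdNormalPDF; ring)

lemma integral_mul_phi (t : ℝ) :
    ∫ s in Set.Ioi t, s * stdNormalPDF s = stdNormalPDF t := by
  have hd : ∀ x ∈ Set.Ici t, HasDerivAt (fun s => -stdNormalPDF s) (x * stdNormalPDF x) x := by
    intro x _
    have := (hasDerivAt_phi x).neg
    exact this.congr_deriv (by ring)
  have htend : Tendsto (fun s => -stdNormalPDF s) atTop (nhds 0) := by
    have h0 : Tendsto (fun s : ℝ => s ^ 2 / 2) atTop atTop :=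
      (tendsto_pow_atTop (by norm_num)).atTop_div_const (by norm_num)
    have h1 : Tendsto (fun s : ℝ => -s ^ 2 / 2) atTop atBot := by
      have := tendsto_neg_atTop_atBot.comp h0
      refine this.congr fun s => by simp [Function.comp]; ring
    have h2 : Tendsto stdNormalPDF atTop (nhds 0) := by
      have h3 := (Real.tendsto_exp_atBot.comp h1).const_mul (Real.sqrt (2 * Real.pi))⁻¹
      rw [mul_zero] at h3
      exact h3.congr fun s => by simp [stdNormalPDF, Function.comp]
    simpa using h2.neg
  have := MeasureTheory.integral_Ioi_of_hasDerivAt_of_tendsto' hd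
      mul_phi_integrable.integrableOn htend
  simpa using this

lemma tail_bound {t : ℝ} (_ht : 0 ≤ t) : t * (1 - stdNormalCDF t) ≤ stdNormalPDF t := by
  rw [Q_eq, ← MeasureTheory.integral_const_mul, ← integral_mul_phi t]
  apply MeasureTheory.setIntegral_mono_on
  · exact (phi_integrable.const_mul t).integrableOn
  · exact mul_phi_integrable.integrableOn
  · exact measurableSet_Ioi
  · intro s hs
    exact mul_le_mul_of_nonneg_right (le_of_lt hs) (phi_pos s).le

lemma hasDerivAt_CDF (t : ℝ) : HasDerivAt stdNormalCDF (stdNormalPDF t) t := by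
  have heq : stdNormalCDF = fun x => stdNormalCDF 0 + ∫ s in (0:ℝ)..x, stdNormalPDF s := by
    funext x
    rw [← intervalIntegral.integral_Iic_sub_Iic phi_integrable.integrableOn
      phi_integrable.integrableOn]
    unfold stdNormalCDF; ring
  rw [heq]
  apply HasDerivAt.const_add
  exact intervalIntegral.integral_hasDerivAt_right
    (phi_integrable.intervalIntegrable)
    (phi_cont.stronglyMeasurableAtFilter _ _)
    phi_cont.continuousAt

lemma hasDerivAt_g (t : ℝ) :
    HasDerivAt (fun t => -Real.log (1 - stdNormalCDF t))
      (stdNormalPDF t / (1 - stdNormalCDF t)) t := by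
  have h1 : HasDerivAt (fun t => 1 - stdNormalCDF t) (-stdNormalPDF t) t := by
    exact ((hasDerivAt_const t (1:ℝ)).sub (hasDerivAt_CDF t)).congr_deriv (zero_sub _)
  have h2 := (h1.log (Q_pos t).ne').neg
  exact h2.congr_deriv (by ring)

lemma hasDerivAt_h (t : ℝ) :
    HasDerivAt (fun t => stdNormalPDF t / (1 - stdNormalCDF t))
      ((-t * stdNormalPDF t * (1 - stdNormalCDF t) - stdNormalPDF t * (-stdNormalPDF t)) /
        (1 - stdNormalCDF t) ^ 2) t := by
  have h1 : HasDerivAt (fun t => 1 - stdNormalCDF t) (-stdNormalPDF t) t := by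
    exact ((hasDerivAt_const t (1:ℝ)).sub (hasDerivAt_CDF t)).congr_deriv (zero_sub _)
  exact (hasDerivAt_phi t).div h1 (Q_pos t).ne'

lemma g_convexOn_Ici :
    ConvexOn ℝ (Set.Ici (0:ℝ))
      (fun t => -Real.log (1 - stdNormalCDF t)) := by
  apply convexOn_of_hasDerivWithinAt2_nonneg (convex_Ici 0)
      (f' := fun t => stdNormalPDF t / (1 - stdNormalCDF t))
      (f'' := fun t => (-t * stdNormalPDF t * (1 - stdNormalCDF t)
        - stdNormalPDF t * (-stdNormalPDF t)) / (1 - stdNormalCDF t) ^ 2)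
  · exact Continuous.continuousOn (by
      exact continuous_iff_continuousAt.mpr fun t => (hasDerivAt_g t).continuousAt)
  · intro x _; exact (hasDerivAt_g x).hasDerivWithinAt
  · intro x _; exact (hasDerivAt_h x).hasDerivWithinAt
  · intro x hx
    rw [interior_Ici] at hx
    apply div_nonneg _ (sq_nonneg _)
    have hb := tail_bound (le_of_lt hx)
    nlinarith [phi_pos x, (Q_pos x).le]

lemma g_mono : Monotone (fun t => -Real.log (1 - stdNormalCDF t)) := by
  apply StrictMono.monotone
  apply strictMono_of_hasDerivAt_pos hasDerivAt_g
  intro x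
  exact div_pos (phi_pos x) (Q_pos x)

/-- The function f(z) = −log(1 − Φ(|z|)) is convex on ℝ. -/
theorem stmt_2 :
    ConvexOn ℝ Set.univ (fun z : ℝ => -Real.log (1 - stdNormalCDF |z|)) := by
  set g : ℝ → ℝ := fun t => -Real.log (1 - stdNormalCDF t) with hg
  refine ⟨convex_univ, fun x _ y _ a b ha hb hab => ?_⟩
  have h1 : |a • x + b • y| ≤ a * |x| + b * |y| := by
    calc |a • x + b • y| ≤ |a • x| + |b • y| := abs_add_le _ _
      _ = a * |x| + b * |y| := by
          rw [smul_eq_mul, smul_eq_mul, abs_mul, abs_mul, abs_of_nonneg ha, abs_of_nonneg hb]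
  calc g |a • x + b • y| ≤ g (a * |x| + b * |y|) := g_mono h1
    _ ≤ a • g |x| + b • g |y| := by
        have := g_convexOn_Ici.2 (Set.mem_Ici.mpr (abs_nonneg x))
          (Set.mem_Ici.mpr (abs_nonneg y)) ha hb hab
        simpa only [smul_eq_mul] using this
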